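/- Let R be an ordered field and V a proper convex subring with maximal ideal m. If a₀, …, a_m ∈ Vⁿ, then the standard part of the convex hull [a₀,…,a_m] ⊆ Rⁿ equals the convex hull of st(a₀), …, st(a_m) in kⁿ, where st: Vⁿ → kⁿ is applied coordinatewise. -/

import Mathlib

lemma myhull {F : Type*} [Field F] [LinearOrder F] [IsStrictOrderedRing F] {E : Type*} [AddCommGroup E] [Module F E]
    {k : ℕ} (v : Fin k → E) (x : E) :
    x ∈ convexHull F (Set.range v) ↔
      ∃ w : Fin k → F, (∀ i, 0 ≤ w i) ∧ ∑ i, w i = 1 ∧ ∑ i, w i • v i = x := by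
  constructor
  · intro hx
    rw [convexHull_range_eq_exists_affineCombination] at hx
    obtain ⟨s, w, hw0, hw1, hx⟩ := hx
    rw [s.affineCombination_eq_linear_combination v w hw1] at hx
    refine ⟨fun i => if i ∈ s then w i else 0, fun i => ?_, ?_, ?_⟩
    · by_cases h : i ∈ s <;> simp [h, hw0 i]
    · rw [Finset.sum_ite_mem, Finset.univ_inter, hw1]
    · simp only [ite_smul, zero_smul]
      rw [Finset.sum_ite_mem, Finset.univ_inter, hx]
  · rintro ⟨w, hw0, hw1, rfl⟩
    exact mem_convexHull_of_exists_fintype w v hw0 hw1 (fun i => Set.mem_range_self i) rfl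

lemma my_st_sum {R kk : Type*} [Field R] [LinearOrder R] [IsStrictOrderedRing R]
    [Field kk] [LinearOrder kk] [IsStrictOrderedRing kk]
    (V : Subring R) (st : R → kk)
    (hadd : ∀ x ∈ V, ∀ y ∈ V, st (x + y) = st x + st y)
    {ι : Type*} (t : Finset ι) (f : ι → R) (hf : ∀ i ∈ t, f i ∈ V) :
    st (∑ i ∈ t, f i) = ∑ i ∈ t, st (f i) := by
  have h0 : st 0 = 0 := by
    have := hadd 0 V.zero_mem 0 V.zero_mem
    simp at this; linarith [this]
  revert hf
  induction t using Finset.cons_induction with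
  | empty => intro; simpa using h0
  | cons b s hne ih =>
    intro hf
    rw [Finset.sum_cons, Finset.sum_cons,
      hadd _ (hf b (Finset.mem_cons_self b s)) _
        (Subring.sum_mem V (fun i hi => hf i (Finset.mem_cons_of_mem hi))),
      ih (fun i hi => hf i (Finset.mem_cons_of_mem hi))]

/-- The maximal ideal of a convex subring `V` of an ordered field. -/
def mSet {R : Type*} [Field R] [LinearOrder R] [IsStrictOrderedRing R] (V : Subring R) : Set R :=
  {x : R | x ∈ V ∧ (x = 0 ∨ x⁻¹ ∉ V)}

theorem stmt1 {R kk : Type*} [Field R] [LinearOrder R] [IsStrictOrderedRing R]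
    [Field kk] [LinearOrder kk] [IsStrictOrderedRing kk]
    (V : Subring R)
    (hconv : ∀ x y : R, |x| ≤ |y| → y ∈ V → x ∈ V)
    (hproper : (V : Set R) ≠ Set.univ)
    (st : R → kk)
    (hker : ∀ x ∈ V, ∀ y ∈ V, (st x = st y ↔ x - y ∈ mSet V))
    (hadd : ∀ x ∈ V, ∀ y ∈ V, st (x + y) = st x + st y)
    (hmul : ∀ x ∈ V, ∀ y ∈ V, st (x * y) = st x * st y)
    (hone : st 1 = 1)
    (hmono : ∀ x ∈ V, ∀ y ∈ V, x ≤ y → st x ≤ st y)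
    (hsurj : ∀ c : kk, ∃ x ∈ V, st x = c)
    (n m : ℕ) (a : Fin (m + 1) → (Fin n → R)) (ha : ∀ j i, a j i ∈ V) :
    (fun x : Fin n → R => fun i => st (x i)) ''
        ((convexHull R (Set.range a)) ∩ {x : Fin n → R | ∀ i, x i ∈ V})
      = convexHull kk (Set.range (fun j => fun i => st (a j i))) := by
  have h0 : st 0 = 0 := by
    have := hadd 0 V.zero_mem 0 V.zero_mem
    simp at this; linarith [this]
  have hnonneg : ∀ x ∈ V, 0 ≤ x → 0 ≤ st x := fun x hx h => by
    have := hmono 0 V.zero_mem x hx h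
    rwa [h0] at this
  apply Set.Subset.antisymm
  · rintro _ ⟨x, ⟨hxhull, hxV⟩, rfl⟩
    rw [myhull] at hxhull
    obtain ⟨w, hw0, hw1, hwx⟩ := hxhull
    have hwV : ∀ j, w j ∈ V := by
      intro j
      refine hconv _ 1 ?_ V.one_mem
      rw [abs_one, abs_of_nonneg (hw0 j)]
      calc w j ≤ ∑ i, w i := Finset.single_le_sum (fun i _ => hw0 i) (Finset.mem_univ j)
        _ = 1 := hw1
    rw [myhull]
    refine ⟨fun j => st (w j), fun j => hnonneg _ (hwV j) (hw0 j), ?_, ?_⟩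
    · rw [← my_st_sum V st hadd _ _ (fun i _ => hwV i), hw1, hone]
    · funext i
      rw [Finset.sum_apply]
      simp only [Pi.smul_apply, smul_eq_mul]
      have hx : x i = ∑ j, w j * a j i := by
        rw [← hwx, Finset.sum_apply]; simp
      rw [hx, my_st_sum V st hadd _ _ (fun j _ => V.mul_mem (hwV j) (ha j i))]
      exact (Finset.sum_congr rfl fun j _ => (hmul _ (hwV j) _ (ha j i))).symm
  · intro y hy
    rw [myhull] at hy
    obtain ⟨sw, hs0, hs1, hsy⟩ := hy
    choose t htV hts using fun j => hsurj (sw j)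
    have habsV : ∀ j, |t j| ∈ V := fun j => hconv _ _ (le_of_eq (abs_abs _)) (htV j)
    have hstabs : ∀ j, st |t j| = sw j := by
      intro j
      rcases abs_choice (t j) with h | h
      · rw [h, hts j]
      · have hneg : st (-(t j)) = - st (t j) := by
          have h2 := hadd (t j) (htV j) (-(t j)) (V.neg_mem (htV j))
          simp only [add_neg_cancel, h0] at h2
          linarith
        have hge : 0 ≤ st |t j| := hnonneg _ (habsV j) (abs_nonneg _)
        rw [h, hneg, hts j] at hge ⊢
        linarith [hs0 j]
    set S := ∑ j, |t j| with hS
    have hSV : S ∈ V := Subring.sum_mem V (fun j _ => habsV j)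
    have hstS : st S = 1 := by
      rw [hS, my_st_sum V st hadd _ _ (fun j _ => habsV j)]
      simp only [hstabs]; exact hs1
    have h2V : (2 : R) ∈ V := by
      rw [show (2 : R) = 1 + 1 by norm_num]; exact V.add_mem V.one_mem V.one_mem
    have hm : S - 1 ∈ mSet V := (hker S hSV 1 V.one_mem).1 (by rw [hstS, hone])
    have hhalf : |S - 1| < 1 / 2 := by
      by_contra hc
      push_neg at hc
      rcases hm.2 with h | h
      · rw [h] at hc; simp at hc; linarith
      · apply h
        refine hconv _ 2 ?_ h2V
        rw [abs_inv, abs_two]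
        calc |S - 1|⁻¹ ≤ (1 / 2 : R)⁻¹ := by gcongr
          _ = 2 := by norm_num
    have hSpos : 0 < S := by
      rcases abs_lt.1 hhalf with ⟨h1, h2⟩; linarith
    have hSinvV : S⁻¹ ∈ V := by
      refine hconv _ 2 ?_ h2V
      rw [abs_two, abs_of_nonneg (inv_nonneg.2 hSpos.le)]
      have hhle : (2 : R)⁻¹ ≤ S := by
        rcases abs_lt.1 hhalf with ⟨h1, h2⟩
        rw [show (2 : R)⁻¹ = 1 / 2 by norm_num]; linarith
      calc S⁻¹ ≤ ((2 : R)⁻¹)⁻¹ := by gcongr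
        _ = 2 := by rw [inv_inv]
    have hstSinv : st S⁻¹ = 1 := by
      have h2 := hmul S hSV S⁻¹ hSinvV
      rw [mul_inv_cancel₀ hSpos.ne', hone, hstS, one_mul] at h2
      exact h2.symm
    set u : Fin (m + 1) → R := fun j => |t j| * S⁻¹ with hu
    have huV : ∀ j, u j ∈ V := fun j => V.mul_mem (habsV j) hSinvV
    have hu0 : ∀ j, 0 ≤ u j := fun j =>
      mul_nonneg (abs_nonneg _) (inv_nonneg.2 hSpos.le)
    have hu1 : ∑ j, u j = 1 := by
      rw [hu, ← Finset.sum_mul, ← hS, mul_inv_cancel₀ hSpos.ne']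
    have hstu : ∀ j, st (u j) = sw j := by
      intro j
      rw [hu, hmul _ (habsV j) _ hSinvV, hstabs, hstSinv, mul_one]
    refine ⟨fun i => ∑ j, u j * a j i, ⟨?_, ?_⟩, ?_⟩
    · rw [myhull]
      refine ⟨u, hu0, hu1, ?_⟩
      funext i
      rw [Finset.sum_apply]; simp
    · intro i
      exact Subring.sum_mem V (fun j _ => V.mul_mem (huV j) (ha j i))
    · funext i
      show st (∑ j, u j * a j i) = y i
      rw [my_st_sum V st hadd _ _ (fun j _ => V.mul_mem (huV j) (ha j i))]
      have := congrFun hsy i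
      rw [Finset.sum_apply] at this
      simp only [Pi.smul_apply, smul_eq_mul] at this
      rw [← this]
      exact Finset.sum_congr rfl fun j _ => by
        rw [hmul _ (huV j) _ (ha j i), hstu]
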